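/- arXiv:2203.13162 — 3 statements merged into one kernel-verified Lean document; each statement's English description precedes it below -/
import Mathlib

section
/- The image of the spherical helicoid of pitch 1 is the preimage under the Hopf fibration of a great circle (a Clifford torus): range(φ₁) = {(z,w) ∈ S³ : Im(z·conj(w)) = 0}. -/
/-- The spherical helicoid of pitch `c`:
`φ_c(u,v) = (cos(u)·e^{icv}, sin(u)·e^{iv})`. -/
noncomputable def helicoid (c : ℝ) (q : ℝ × ℝ) : ℂ × ℂ :=
  ((Real.cos q.1 : ℂ) * Complex.exp (Complex.I * ((c : ℂ) * (q.2 : ℂ))),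
   (Real.sin q.1 : ℂ) * Complex.exp (Complex.I * (q.2 : ℂ)))

lemma exists_cos_sin (a b : ℝ) (h : a ^ 2 + b ^ 2 = 1) :
    ∃ u : ℝ, Real.cos u = a ∧ Real.sin u = b := by
  set z : ℂ := ⟨a, b⟩ with hz
  have habs : ‖z‖ = 1 := by
    have : ‖z‖ ^ 2 = 1 := by
      rw [Complex.sq_norm, Complex.normSq_mk]; ring_nf; linarith [h]
    nlinarith [norm_nonneg z]
  have hz0 : z ≠ 0 := by
    intro h0; rw [h0] at habs; simp at habs
  refine ⟨Complex.arg z, ?_, ?_⟩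
  · rw [Complex.cos_arg hz0, habs]; simp [hz]
  · rw [Complex.sin_arg, habs]; simp [hz]

/-- The image of the spherical helicoid of pitch  is the Clifford torus: the
set of points of  where . -/
theorem helicoid_one_range :
    Set.range (helicoid 1) =
      {p : ℂ × ℂ | ‖p.1‖ ^ 2 + ‖p.2‖ ^ 2 = 1 ∧
        (p.1 * (starRingEnd ℂ) p.2).im = 0} := by
  ext p
  simp only [Set.mem_range, Set.mem_setOf_eq]
  constructor
  · rintro ⟨⟨u, v⟩, rfl⟩
    simp only [helicoid, Complex.ofReal_one, one_mul]
    constructor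
    · rw [norm_mul, norm_mul, mul_comm Complex.I, Complex.norm_exp_ofReal_mul_I,
        mul_one, mul_one, Complex.norm_real, Complex.norm_real, Real.norm_eq_abs,
        Real.norm_eq_abs, sq_abs, sq_abs]
      exact Real.cos_sq_add_sin_sq u
    · have hc : (starRingEnd ℂ) ((Real.sin u : ℂ) * Complex.exp (Complex.I * (v : ℂ)))
          = (Real.sin u : ℂ) * Complex.exp (-(Complex.I * (v : ℂ))) := by
        rw [map_mul, Complex.conj_ofReal, ← Complex.exp_conj, map_mul,
          Complex.conj_I, Complex.conj_ofReal, neg_mul]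
      have hmul : ((Real.cos u : ℂ) * Complex.exp (Complex.I * (v : ℂ))) *
          ((Real.sin u : ℂ) * Complex.exp (-(Complex.I * (v : ℂ))))
          = (Real.cos u : ℂ) * (Real.sin u : ℂ) *
            (Complex.exp (Complex.I * (v : ℂ)) * Complex.exp (-(Complex.I * (v : ℂ)))) := by
        ring
      rw [hc, hmul, ← Complex.exp_add, add_neg_cancel, Complex.exp_zero, mul_one,
        ← Complex.ofReal_mul, Complex.ofReal_im]
  · obtain ⟨z, w⟩ := p
    rintro ⟨h1, h2⟩
    by_cases hw : w = 0
    · subst hw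
      have hz1 : ‖z‖ = 1 := by
        simp only [norm_zero, ne_eq] at h1
        nlinarith [norm_nonneg z, h1]
      refine ⟨(0, Complex.arg z), ?_⟩
      simp only [helicoid]
      have : Complex.exp (Complex.I * (Complex.arg z : ℂ)) = z := by
        rw [mul_comm]
        have := Complex.norm_mul_exp_arg_mul_I z
        rwa [hz1, Complex.ofReal_one, one_mul] at this
      simp [this]
    · set β := Complex.arg w with hβ
      have hwdec : (‖w‖ : ℂ) * Complex.exp (β * Complex.I) = w :=
        Complex.norm_mul_exp_arg_mul_I w
      have habsw : (0:ℝ) < ‖w‖ := norm_pos_iff.mpr hw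
      set a : ℝ := (z * Complex.exp (-(β * Complex.I))).re with ha
      have hkey : z * Complex.exp (-(β * Complex.I)) = (a : ℂ) := by
        have him : (z * Complex.exp (-(β * Complex.I))).im = 0 := by
          have hconj : (starRingEnd ℂ) w =
              (‖w‖ : ℂ) * Complex.exp (-(β * Complex.I)) := by
            rw [← hwdec]
            simp [← Complex.exp_conj, map_mul, Complex.conj_I, Complex.conj_ofReal]
          have hmul : z * (starRingEnd ℂ) w =
              (‖w‖ : ℂ) * (z * Complex.exp (-(β * Complex.I))) := by
            rw [hconj]; ring
          have him2 := congrArg Complex.im hmul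
          rw [h2, Complex.mul_im, Complex.ofReal_re, Complex.ofReal_im,
            zero_mul, add_zero] at him2
          exact (mul_eq_zero.mp him2.symm).resolve_left (ne_of_gt habsw)
        exact Complex.ext rfl him
      have hzdec : z = (a : ℂ) * Complex.exp (β * Complex.I) := by
        have hstep : z * Complex.exp (-(β * Complex.I)) * Complex.exp (β * Complex.I)
            = z := by
          rw [mul_assoc, ← Complex.exp_add]; simp
        rw [← hstep, hkey]
      have hsum : a ^ 2 + (‖w‖) ^ 2 = 1 := by
        have habsz : ‖z‖ = |a| := by
          rw [hzdec, norm_mul]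
          simp [Complex.norm_exp_ofReal_mul_I, Complex.norm_real]
        rw [habsz, sq_abs] at h1
        exact h1
      obtain ⟨u, hcos, hsin⟩ := exists_cos_sin a (‖w‖) hsum
      refine ⟨(u, β), ?_⟩
      simp only [helicoid, Complex.ofReal_one, one_mul]
      rw [hcos, hsin]
      have e1 : Complex.exp (Complex.I * (β : ℂ)) = Complex.exp ((β : ℂ) * Complex.I) := by
        rw [mul_comm]
      rw [e1]
      simp only [Prod.mk.injEq]
      exact ⟨hzdec.symm, hwdec⟩
end

section
/- If c ∈ ℝ is irrational, then the image of the spherical helicoid of pitch c is dense in S³: the topological closure of range(φ_c) equals S³ = {(z,w) ∈ ℂ² : |z|² + |w|² = 1}. -/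
open AddSubgroup in
/-- If `c` is irrational, the subgroup `2πℤ + 2πcℤ` is dense in `ℝ`. -/
lemma dense_two_pi_zmultiples_sup (c : ℝ) (hc : Irrational c) :
    Dense ((zmultiples (2*Real.pi) ⊔ zmultiples (2*Real.pi*c) : AddSubgroup ℝ) : Set ℝ) := by
  rcases (zmultiples (2*Real.pi) ⊔ zmultiples (2*Real.pi*c)).dense_or_cyclic with h | ⟨a, ha⟩
  · exact h
  · exfalso
    have h1 : (2*Real.pi) ∈ AddSubgroup.closure ({a} : Set ℝ) := by
      rw [← ha]; exact le_sup_left (α := AddSubgroup ℝ) (mem_zmultiples _)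
    have h2 : (2*Real.pi*c) ∈ AddSubgroup.closure ({a} : Set ℝ) := by
      rw [← ha]; exact le_sup_right (α := AddSubgroup ℝ) (mem_zmultiples _)
    rw [AddSubgroup.mem_closure_singleton] at h1 h2
    obtain ⟨m, hm⟩ := h1
    obtain ⟨n, hn⟩ := h2
    rw [zsmul_eq_mul] at hm hn
    have hpi : (2:ℝ)*Real.pi ≠ 0 := by positivity
    have ha0 : a ≠ 0 := by rintro rfl; simp at hm
    have hm0 : (m:ℝ) ≠ 0 := by rintro h; rw [h] at hm; simp at hm
    have hcne : c = (n : ℝ) / (m : ℝ) := by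
      have key : (n : ℝ) = (m : ℝ) * c := by
        apply mul_right_cancel₀ ha0
        rw [hn, ← hm]; ring
      field_simp [key]
      rw [key]; ring
    rw [hcne] at hc
    exact (Rat.not_irrational ((n:ℚ)/(m:ℚ))) (by push_cast; exact hc)

/-- If the pitch  is irrational, the image of the spherical helicoid of
pitch  is dense in the unit sphere . -/
theorem helicoid_irrational_dense (c : ℝ) (hc : Irrational c) :
    closure (Set.range (helicoid c)) =
      {p : ℂ × ℂ | ‖p.1‖ ^ 2 + ‖p.2‖ ^ 2 = 1} := by
  have habs : ∀ x : ℝ, ‖Complex.exp (Complex.I * (x : ℂ))‖ = 1 := fun x => by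
    rw [mul_comm]; exact Complex.norm_exp_ofReal_mul_I x
  apply Set.Subset.antisymm
  · -- closure ⊆ sphere
    apply closure_minimal
    · rintro _ ⟨⟨u, v⟩, rfl⟩
      show ‖_‖ ^ 2 + ‖_‖ ^ 2 = 1
      rw [helicoid]
      have e : Complex.I * ((c : ℂ) * (v : ℂ)) = Complex.I * ((c * v : ℝ) : ℂ) := by
        push_cast; ring
      rw [e, norm_mul, norm_mul, habs, habs, mul_one, mul_one, Complex.norm_real,
        Complex.norm_real, Real.norm_eq_abs, Real.norm_eq_abs, sq_abs, sq_abs]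
      exact Real.cos_sq_add_sin_sq u
    · exact isClosed_eq (((continuous_norm.comp continuous_fst).pow 2).add
        ((continuous_norm.comp continuous_snd).pow 2)) continuous_const
  · rintro ⟨z, w⟩ hp
    simp only [Set.mem_setOf_eq] at hp
    set r : ℝ := ‖z‖ with hr
    set s : ℝ := ‖w‖ with hs
    have hs1 : s ≤ 1 := by nlinarith [norm_nonneg z, norm_nonneg w]
    have hsnn : 0 ≤ s := norm_nonneg w
    set u : ℝ := Real.arcsin s with hu
    have hsin : Real.sin u = s := Real.sin_arcsin (by linarith) hs1
    have hcos : Real.cos u = r := by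
      rw [hu, Real.cos_arcsin]
      have : 1 - s^2 = r^2 := by linarith
      rw [this, Real.sqrt_sq (norm_nonneg z)]
    set α : ℝ := z.arg with hα
    set β : ℝ := w.arg with hβ
    have hz : (r : ℂ) * Complex.exp (Complex.I * (α : ℂ)) = z := by
      rw [mul_comm Complex.I]; exact Complex.norm_mul_exp_arg_mul_I z
    have hw : (s : ℂ) * Complex.exp (Complex.I * (β : ℂ)) = w := by
      rw [mul_comm Complex.I]; exact Complex.norm_mul_exp_arg_mul_I w
    set g : ℝ → ℂ × ℂ := fun t =>
      ((r : ℂ) * Complex.exp (Complex.I * ((c * β : ℝ) + (t : ℝ))),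
       (s : ℂ) * Complex.exp (Complex.I * (β : ℂ))) with hg
    have hgc : Continuous g := by fun_prop
    have hgp : g (α - c * β) = (z, w) := by
      rw [hg]
      simp only
      rw [← hz, ← hw]
      congr 2
      push_cast
      ring_nf
    set S : Set ℝ := ((AddSubgroup.zmultiples (2*Real.pi) ⊔
        AddSubgroup.zmultiples (2*Real.pi*c) : AddSubgroup ℝ) : Set ℝ) with hS
    have hsub : ∀ x ∈ S, g x ∈ Set.range (helicoid c) := by
      intro x hx
      rw [hS, SetLike.mem_coe, AddSubgroup.mem_sup] at hx
      obtain ⟨y, hy, z', hz', hyz⟩ := hx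
      rw [AddSubgroup.mem_zmultiples_iff] at hy hz'
      obtain ⟨m, rfl⟩ := hy
      obtain ⟨n, rfl⟩ := hz'
      refine ⟨(u, β + 2 * Real.pi * n), ?_⟩
      rw [helicoid, hg]
      simp only
      rw [hcos, hsin]
      subst hyz
      have e1 : Complex.I * (((c * β : ℝ) : ℂ) + ((m • (2*Real.pi) + n • (2*Real.pi*c) : ℝ) : ℂ))
          = Complex.I * ((c : ℂ) * ((β + 2*Real.pi*(n:ℝ) : ℝ) : ℂ))
            + (m : ℂ) * (2 * Real.pi * Complex.I) := by
        push_cast [zsmul_eq_mul]; ring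
      have e2 : Complex.I * (((β + 2*Real.pi*(n:ℝ) : ℝ)) : ℂ)
          = Complex.I * (β : ℂ) + (n : ℂ) * (2 * Real.pi * Complex.I) := by
        push_cast; ring
      rw [Prod.mk.injEq]
      constructor
      · rw [e1, Complex.exp_add, Complex.exp_int_mul_two_pi_mul_I, mul_one]
      · rw [e2, Complex.exp_add, Complex.exp_int_mul_two_pi_mul_I, mul_one]
    have hdense := dense_two_pi_zmultiples_sup c hc
    have hmem : (z, w) ∈ closure (g '' S) := by
      rw [← hgp]
      apply image_closure_subset_closure_image hgc
      exact Set.mem_image_of_mem g (by rw [hdense.closure_eq]; trivial)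
    have himg : g '' S ⊆ Set.range (helicoid c) := by
      rintro _ ⟨x, hx, rfl⟩; exact hsub x hx
    exact closure_mono himg hmem
end

section
/- Let κ > 0 and τ ≠ 0. Then: (i) Θ(x,y,z) lies in the unit sphere S³ = {(z,w) ∈ ℂ² : |z|² + |w|² = 1} for every (x,y,z) ∈ ℝ³, and Θ is periodic in z with period 8πτ/κ, i.e. Θ(x, y, z + 8πτ/κ) = Θ(x,y,z); (ii) the range of Θ is exactly S³ minus one Hopf fiber: range(Θ) = {(z,w) ∈ S³ : w ≠ 0}. -/
set_option maxRecDepth 8000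

/-- The covering map `Θ : ℝ³ → ℂ²` onto the Berger sphere minus a fiber,
`Θ(x,y,z) = (1 + (κ/4)(x²+y²))^{−1/2} ((√κ/2)(y+ix)e^{iκz/(4τ)}, e^{iκz/(4τ)})`. -/
noncomputable def ThetaBerger (κ τ : ℝ) (p : ℝ × ℝ × ℝ) : ℂ × ℂ :=
  (((Real.sqrt (1 + κ / 4 * (p.1 ^ 2 + p.2.1 ^ 2)))⁻¹ : ℂ) *
      (((Real.sqrt κ / 2 : ℝ) : ℂ) * ((p.2.1 : ℂ) + (p.1 : ℂ) * Complex.I)) *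
      Complex.exp (Complex.I * ((κ * p.2.2 / (4 * τ) : ℝ) : ℂ)),
   ((Real.sqrt (1 + κ / 4 * (p.1 ^ 2 + p.2.1 ^ 2)))⁻¹ : ℂ) *
      Complex.exp (Complex.I * ((κ * p.2.2 / (4 * τ) : ℝ) : ℂ)))

private lemma thetaAux_norm (κ τ : ℝ) (hκ : 0 < κ) (p : ℝ × ℝ × ℝ) :
    ‖(ThetaBerger κ τ p).1‖ ^ 2 + ‖(ThetaBerger κ τ p).2‖ ^ 2 = 1 := by
  obtain ⟨x, y, z⟩ := p
  simp only [ThetaBerger]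
  have hS : (0:ℝ) < 1 + κ / 4 * (x ^ 2 + y ^ 2) := by positivity
  have h1 : Real.sqrt (1 + κ / 4 * (x ^ 2 + y ^ 2)) ^ 2 = 1 + κ / 4 * (x ^ 2 + y ^ 2) :=
    Real.sq_sqrt hS.le
  have h2 : Real.sqrt κ ^ 2 = κ := Real.sq_sqrt hκ.le
  have he : ‖Complex.exp (Complex.I * ((κ * z / (4 * τ) : ℝ) : ℂ))‖ = 1 := by
    rw [mul_comm]; exact Complex.norm_exp_ofReal_mul_I _
  have hy : ‖(y : ℂ) + (x : ℂ) * Complex.I‖ ^ 2 = y ^ 2 + x ^ 2 := by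
    rw [Complex.sq_norm]
    simp [Complex.normSq_apply]
    ring
  have hs0 : Real.sqrt (1 + κ / 4 * (x ^ 2 + y ^ 2)) ≠ 0 := by positivity
  simp only [norm_mul, norm_inv, he, mul_one, Complex.norm_real, Real.norm_eq_abs,
    abs_of_nonneg (Real.sqrt_nonneg (1 + κ / 4 * (x ^ 2 + y ^ 2))),
    abs_of_nonneg (by positivity : (0:ℝ) ≤ Real.sqrt κ / 2), mul_pow, hy]
  field_simp
  nlinarith [h1, h2, Real.sq_sqrt (by positivity : (0:ℝ) ≤ (4 + κ * (x ^ 2 + y ^ 2)) / 4)]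

private lemma thetaAux_exp (κ τ z : ℝ) (hκ : κ ≠ 0) (hτ : τ ≠ 0) :
    Complex.exp (Complex.I * ((κ * (z + 8 * Real.pi * τ / κ) / (4 * τ) : ℝ) : ℂ)) =
    Complex.exp (Complex.I * ((κ * z / (4 * τ) : ℝ) : ℂ)) := by
  have h : (κ * (z + 8 * Real.pi * τ / κ) / (4 * τ) : ℝ) = κ * z / (4 * τ) + 2 * Real.pi := by
    field_simp; ring
  rw [h, Complex.ofReal_add, mul_add, Complex.exp_add]
  norm_num [mul_comm Complex.I, Complex.exp_two_pi_mul_I]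

private lemma thetaAux_surj (κ τ : ℝ) (hκ : 0 < κ) (hτ : τ ≠ 0) (a b : ℂ)
    (hab : ‖a‖ ^ 2 + ‖b‖ ^ 2 = 1) (hb : b ≠ 0) :
    ∃ x y z : ℝ, ThetaBerger κ τ (x, y, z) = (a, b) := by
  obtain ⟨c, hc⟩ : ∃ c : ℂ, c = ((2 / Real.sqrt κ : ℝ) : ℂ) * (a / b) := ⟨_, rfl⟩
  refine ⟨c.im, c.re, 4 * τ * Complex.arg b / κ, ?_⟩
  have hr : (0:ℝ) < ‖b‖ := by simpa [norm_pos_iff] using hb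
  have hsk : (0:ℝ) < Real.sqrt κ := Real.sqrt_pos.mpr hκ
  have hc2 : c.im ^ 2 + c.re ^ 2 = 4 / κ * (‖a‖ ^ 2 / ‖b‖ ^ 2) := by
    have : c.im ^ 2 + c.re ^ 2 = ‖c‖ ^ 2 := by
      rw [Complex.sq_norm, Complex.normSq_apply]; ring
    rw [this, hc, norm_mul, norm_div, mul_pow, div_pow, Complex.norm_real, Real.norm_eq_abs,
      abs_of_nonneg (by positivity : (0:ℝ) ≤ 2 / Real.sqrt κ), div_pow,
      Real.sq_sqrt hκ.le]
    ring
  have hS : (1 + κ / 4 * (c.im ^ 2 + c.re ^ 2) : ℝ) = (‖b‖ ^ 2)⁻¹ := by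
    rw [hc2]
    have : ‖a‖ ^ 2 = 1 - ‖b‖ ^ 2 := by linarith
    rw [this]
    field_simp
    ring
  have hsqrt : Real.sqrt (1 + κ / 4 * (c.im ^ 2 + c.re ^ 2)) = (‖b‖)⁻¹ := by
    rw [hS]
    rw [show ((‖b‖ ^ 2)⁻¹ : ℝ) = ((‖b‖)⁻¹) ^ 2 by ring]
    exact Real.sqrt_sq (by positivity)
  have hexp : Complex.exp (Complex.I * ((κ * (4 * τ * Complex.arg b / κ) / (4 * τ) : ℝ) : ℂ)) =
      Complex.exp (Complex.arg b * Complex.I) := by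
    rw [show (κ * (4 * τ * Complex.arg b / κ) / (4 * τ) : ℝ) = Complex.arg b by
      field_simp]
    ring_nf
  have hb' : (‖b‖ : ℂ) * Complex.exp (Complex.arg b * Complex.I) = b :=
    Complex.norm_mul_exp_arg_mul_I b
  have habs : ((‖b‖ : ℝ) : ℂ) ≠ 0 := by exact_mod_cast hr.ne'
  simp only [ThetaBerger]
  refine Prod.ext ?_ ?_
  · show _ = a
    rw [hsqrt, hexp]
    push_cast
    rw [inv_inv]
    have hcc : (c.re : ℂ) + (c.im : ℂ) * Complex.I = c := Complex.re_add_im c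
    rw [hcc, hc]
    push_cast
    have hexpb : Complex.exp (Complex.arg b * Complex.I) = b / ‖b‖ := by
      rw [eq_div_iff habs, mul_comm]; exact hb'
    rw [hexpb]
    have hB : ((Real.sqrt κ : ℝ) : ℂ) ≠ 0 := by exact_mod_cast hsk.ne'
    field_simp
  · show _ = b
    rw [hsqrt, hexp]
    push_cast
    rw [inv_inv]
    exact_mod_cast hb'

/-- `Θ` maps into the unit sphere `S³`, is periodic in `z` with period `8πτ/κ`,
and its range is exactly `S³` minus one Hopf fiber, namely `{(z,w) ∈ S³ : w ≠ 0}`. -/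
theorem thetaBerger_into_sphere_periodic_range (κ τ : ℝ) (hκ : 0 < κ) (hτ : τ ≠ 0) :
    (∀ p : ℝ × ℝ × ℝ,
        ‖(ThetaBerger κ τ p).1‖ ^ 2 + ‖(ThetaBerger κ τ p).2‖ ^ 2 = 1 ∧
        ThetaBerger κ τ (p.1, p.2.1, p.2.2 + 8 * Real.pi * τ / κ) = ThetaBerger κ τ p) ∧
    Set.range (ThetaBerger κ τ) =
      {q : ℂ × ℂ | ‖q.1‖ ^ 2 + ‖q.2‖ ^ 2 = 1 ∧ q.2 ≠ 0} := by
  constructor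
  · intro p
    refine ⟨thetaAux_norm κ τ hκ p, ?_⟩
    obtain ⟨x, y, z⟩ := p
    simp only [ThetaBerger, thetaAux_exp κ τ z hκ.ne' hτ]
  · ext q
    constructor
    · rintro ⟨p, rfl⟩
      refine ⟨thetaAux_norm κ τ hκ p, ?_⟩
      simp only [ThetaBerger]
      have hs0 : Real.sqrt (1 + κ / 4 * (p.1 ^ 2 + p.2.1 ^ 2)) ≠ 0 := by positivity
      exact mul_ne_zero (inv_ne_zero (by exact_mod_cast hs0)) (Complex.exp_ne_zero _)
    · rintro ⟨hab, hb⟩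
      obtain ⟨x, y, z, h⟩ := thetaAux_surj κ τ hκ hτ q.1 q.2 hab hb
      exact ⟨(x, y, z), by rw [h]⟩
end
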